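/- Let θ be real with sin θ ≠ 0 and cos θ ≠ 0, and let x : ℝ → ℝ⁴ be differentiable with x'(t) = A(θ)·x(t) for all t. Then the function t ↦ ‖x(t)‖² is monotone nondecreasing, since its derivative equals ⟨x(t), (A(θ)+A(θ)ᵀ)·x(t)⟩ = 2⟨x(t), S₀·x(t)⟩ ≥ 0. -/

import Mathlib

open Real Matrix

noncomputable def alphaA (θ : ℝ) : Matrix (Fin 4) (Fin 4) ℝ :=
  !![1, -Real.cot θ, -Real.tan θ, 1;
     Real.cot θ, 1, -1, -Real.tan θ;
     Real.tan θ, -1, 1, -Real.cot θ;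
     1, Real.tan θ, Real.cot θ, 1]

def S₀ : Matrix (Fin 4) (Fin 4) ℝ := !![1,0,0,1; 0,1,-1,0; 0,-1,1,0; 1,0,0,1]

lemma inner_eq (v w : EuclideanSpace ℝ (Fin 4)) :
    (inner ℝ v w : ℝ) = v 0 * w 0 + v 1 * w 1 + v 2 * w 2 + v 3 * w 3 := by
  simp [PiLp.inner_apply, Fin.sum_univ_four, mul_comm]

lemma key1 (θ : ℝ) (v : EuclideanSpace ℝ (Fin 4)) :
    (inner ℝ v (WithLp.toLp 2 ((alphaA θ).mulVec v : Fin 4 → ℝ) : EuclideanSpace ℝ (Fin 4)) : ℝ)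
      = (v 0 + v 3) ^ 2 + (v 1 - v 2) ^ 2 := by
  simp only [inner_eq, alphaA, Matrix.mulVec, dotProduct, Fin.sum_univ_four]
  simp [Matrix.cons_val_zero, Matrix.cons_val_one, Matrix.head_cons]
  ring

lemma key3 (v : EuclideanSpace ℝ (Fin 4)) :
    (inner ℝ v (WithLp.toLp 2 ((S₀.mulVec v : Fin 4 → ℝ)) : EuclideanSpace ℝ (Fin 4)) : ℝ)
      = (v 0 + v 3) ^ 2 + (v 1 - v 2) ^ 2 := by
  simp only [inner_eq, S₀, Matrix.mulVec, dotProduct, Fin.sum_univ_four]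
  simp
  ring

lemma key2 (θ : ℝ) (v : EuclideanSpace ℝ (Fin 4)) :
    (inner ℝ v (WithLp.toLp 2 (((alphaA θ + (alphaA θ)ᵀ).mulVec v : Fin 4 → ℝ)) : EuclideanSpace ℝ (Fin 4)) : ℝ)
      = 2 * ((v 0 + v 3) ^ 2 + (v 1 - v 2) ^ 2) := by
  have h : alphaA θ + (alphaA θ)ᵀ = (2 : ℝ) • S₀ := by
    ext i j
    fin_cases i <;> fin_cases j <;> simp [alphaA, S₀, Matrix.transpose, Matrix.of_apply] <;> ring
  rw [h]
  simp only [Matrix.smul_mulVec]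
  have := key3 v
  rw [show (WithLp.toLp 2 (((2 : ℝ) • (S₀.mulVec v) : Fin 4 → ℝ)) : EuclideanSpace ℝ (Fin 4))
      = (2 : ℝ) • (WithLp.toLp 2 ((S₀.mulVec v : Fin 4 → ℝ)) : EuclideanSpace ℝ (Fin 4)) from rfl,
    inner_smul_right, this]

theorem stmt14 (θ : ℝ) (hs : Real.sin θ ≠ 0) (hc : Real.cos θ ≠ 0)
    (x : ℝ → EuclideanSpace ℝ (Fin 4))
    (hx : ∀ t, HasDerivAt x (WithLp.toLp 2 ((alphaA θ).mulVec (x t) : Fin 4 → ℝ) : EuclideanSpace ℝ (Fin 4)) t) :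
    Monotone (fun t => ‖x t‖ ^ 2) ∧
    ∀ t, deriv (fun s => ‖x s‖ ^ 2) t =
        inner ℝ (x t) (WithLp.toLp 2 (((alphaA θ + (alphaA θ)ᵀ).mulVec (x t) : Fin 4 → ℝ)) :
          EuclideanSpace ℝ (Fin 4)) ∧
      deriv (fun s => ‖x s‖ ^ 2) t =
        2 * inner ℝ (x t) (WithLp.toLp 2 ((S₀.mulVec (x t) : Fin 4 → ℝ)) : EuclideanSpace ℝ (Fin 4)) ∧
      (0 : ℝ) ≤ deriv (fun s => ‖x s‖ ^ 2) t := by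
  have hg : ∀ t, HasDerivAt (fun s => ‖x s‖ ^ 2)
      (2 * (inner ℝ (x t) (WithLp.toLp 2 ((alphaA θ).mulVec (x t) : Fin 4 → ℝ) : EuclideanSpace ℝ (Fin 4)) : ℝ)) t := by
    intro t
    have h := (hx t).inner ℝ (hx t)
    have heq : (fun s => (inner ℝ (x s) (x s) : ℝ)) = fun s => ‖x s‖ ^ 2 := by
      funext s; exact real_inner_self_eq_norm_sq (x s)
    rw [heq] at h
    refine h.congr_deriv ?_
    rw [real_inner_comm]
    ring
  have hderiv : ∀ t, deriv (fun s => ‖x s‖ ^ 2) t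
      = 2 * ((x t 0 + x t 3) ^ 2 + (x t 1 - x t 2) ^ 2) := by
    intro t
    rw [(hg t).deriv, key1]
  constructor
  · apply monotone_of_deriv_nonneg
    · exact fun t => (hg t).differentiableAt
    · intro t
      rw [hderiv t]
      positivity
  · intro t
    refine ⟨by rw [hderiv t, key2], by rw [hderiv t, key3], by rw [hderiv t]; positivity⟩
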